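/- arXiv:1106.4135 — 2 statements merged into one kernel-verified Lean document; each statement's English description precedes it below -/
import Mathlib

section
/- If a Hausdorff topological space X is quasi-developable and the subspace X^d of non-isolated points is perfect (every closed subset of X^d is a Gδ-set in X^d), then X has a development at non-isolated points. -/
open Set Topology Filter Function

/-- `st(x, 𝒰) = ⋃ {P ∈ 𝒰 : x ∈ P}`. -/
def stpt {X : Type*} (x : X) (𝒰 : Set (Set X)) : Set X := ⋃₀ {P ∈ 𝒰 | x ∈ P}

/-- The set `X^d` of non-isolated points of `X`. -/
def nonIsolatedPoints (X : Type*) [TopologicalSpace X] : Set X :=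
  {x : X | ¬IsOpen ({x} : Set X)}

/-- A development at non-isolated points: a sequence of open covers of `X` such that
the stars at each non-isolated point form a neighborhood base there. -/
def IsDevelopmentAtNonIsolatedPoints {X : Type*} [TopologicalSpace X]
    (𝒰 : ℕ → Set (Set X)) : Prop :=
  (∀ n, ∀ P ∈ 𝒰 n, IsOpen P) ∧ (∀ n, ⋃₀ 𝒰 n = Set.univ) ∧
    ∀ x ∈ nonIsolatedPoints X, ∀ U : Set X, x ∈ U → IsOpen U →
      ∃ n, stpt x (𝒰 n) ⊆ U

/-- A quasi-development for `X`. -/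
def IsQuasiDevelopment {X : Type*} [TopologicalSpace X] (𝒰 : ℕ → Set (Set X)) : Prop :=
  (∀ n, ∀ P ∈ 𝒰 n, IsOpen P) ∧
    ∀ (x : X) (U : Set X), x ∈ U → IsOpen U →
      ∃ n, x ∈ stpt x (𝒰 n) ∧ stpt x (𝒰 n) ⊆ U

/-- A `g`-function for `X`. -/
def IsGFunction {X : Type*} [TopologicalSpace X] (g : ℕ → X → Set X) : Prop :=
  (∀ n x, IsOpen (g n x)) ∧ (∀ n x, x ∈ g n x) ∧ ∀ n x, g (n + 1) x ⊆ g n x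

/-- The set of non-isolated points is closed. -/
lemma nonIsolated_isClosed (X : Type*) [TopologicalSpace X] :
    IsClosed (nonIsolatedPoints X) := by
  rw [← isOpen_compl_iff]
  have : (nonIsolatedPoints X)ᶜ = ⋃ x ∈ {x : X | IsOpen ({x} : Set X)}, {x} := by
    ext y
    simp [nonIsolatedPoints]
  rw [this]
  exact isOpen_biUnion fun x hx => hx

/-- Theorem 2.1, (3) ⇒ (1). -/
theorem theorem_2_1_3_implies_1 {X : Type*} [TopologicalSpace X] [T2Space X]
    (hq : ∃ 𝒰 : ℕ → Set (Set X), IsQuasiDevelopment 𝒰)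
    (hperf : ∀ C : Set ↥(nonIsolatedPoints X), IsClosed C → IsGδ C) :
    ∃ 𝒰 : ℕ → Set (Set X), IsDevelopmentAtNonIsolatedPoints 𝒰 := by
  obtain ⟨Pc, hPcopen, hPcbase⟩ := hq
  set D := nonIsolatedPoints X with hDdef
  have hD : IsClosed D := nonIsolated_isClosed X
  -- V n : union of Pc n
  set V : ℕ → Set X := fun n => ⋃₀ Pc n with hV
  have hVopen : ∀ n, IsOpen (V n) := fun n => isOpen_sUnion (hPcopen n)
  -- the trace of V n on D is open in D; its complement is closed hence Gδ
  have key : ∀ n, ∃ f : ℕ → Set ↥D, (∀ k, IsClosed (f k)) ∧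
      ((↑) ⁻¹' (V n) : Set ↥D) = ⋃ k, f k := by
    intro n
    have hclosed : IsClosed (((↑) ⁻¹' (V n) : Set ↥D)ᶜ) :=
      (IsOpen.preimage continuous_subtype_val (hVopen n)).isClosed_compl
    obtain ⟨g, hgopen, hgeq⟩ := (hperf _ hclosed).eq_iInter_nat
    refine ⟨fun k => (g k)ᶜ, fun k => (hgopen k).isClosed_compl, ?_⟩
    have := congrArg compl hgeq
    rw [compl_compl, compl_iInter] at this
    exact this
  choose f hfclosed hfeq using key
  -- C n k : image in X, closed
  set C : ℕ → ℕ → Set X := fun n k => (↑) '' (f n k) with hC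
  have hCclosed : ∀ n k, IsClosed (C n k) := fun n k =>
    hD.isClosedMap_subtype_val _ (hfclosed n k)
  have hCsubV : ∀ n k, C n k ⊆ V n := by
    intro n k x hx
    obtain ⟨y, hy, rfl⟩ := hx
    have : y ∈ ((↑) ⁻¹' (V n) : Set ↥D) := by rw [hfeq n]; exact mem_iUnion.2 ⟨k, hy⟩
    exact this
  have hCcover : ∀ n, ∀ x ∈ D, x ∈ V n → ∃ k, x ∈ C n k := by
    intro n x hxD hxV
    have : (⟨x, hxD⟩ : ↥D) ∈ ((↑) ⁻¹' (V n) : Set ↥D) := hxV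
    rw [hfeq n] at this
    obtain ⟨k, hk⟩ := mem_iUnion.1 this
    exact ⟨k, ⟨⟨x, hxD⟩, hk, rfl⟩⟩
  -- the development
  refine ⟨fun m => insert (C (Nat.unpair m).1 (Nat.unpair m).2)ᶜ (Pc (Nat.unpair m).1),
    ?_, ?_, ?_⟩
  · rintro m P (rfl | hP)
    · exact (hCclosed _ _).isOpen_compl
    · exact hPcopen _ P hP
  · intro m
    apply eq_univ_of_forall
    intro x
    by_cases hx : x ∈ C (Nat.unpair m).1 (Nat.unpair m).2
    · obtain ⟨P, hP, hxP⟩ := hCsubV _ _ hx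
      exact ⟨P, Or.inr hP, hxP⟩
    · exact ⟨_, Or.inl rfl, hx⟩
  · intro x hxD U hxU hU
    obtain ⟨n, hxst, hstU⟩ := hPcbase x U hxU hU
    have hxV : x ∈ V n := by
      obtain ⟨P, ⟨hP, hxP⟩, _⟩ := hxst
      exact ⟨P, hP, hxP⟩
    obtain ⟨k, hk⟩ := hCcover n x hxD hxV
    refine ⟨Nat.pair n k, ?_⟩
    intro y hy
    obtain ⟨P, ⟨hP, hxP⟩, hyP⟩ := hy
    simp only [Nat.unpair_pair] at hP
    rcases hP with rfl | hP
    · exact absurd hk hxP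
    · exact hstU ⟨P, ⟨hP, hxP⟩, hyP⟩
end

section
/- Let X be a Hausdorff topological space admitting a pair-network ⋃_{n∈ℕ} 𝒫_n such that (i) for every n, the family 𝒫_n′|_{X^d} consists of sets closed in X^d and is locally finite in X^d, and (ii) for every x ∈ U with U open in X, there exists m with x ∈ st°(x, 𝒫_m) ⊆ U. Then X is developable at non-isolated points. -/
open Set Topology Filter Function

/-- `st(x, 𝒰)` for a pair-family `𝒰`. -/
def pairSt {X : Type*} (x : X) (𝒰 : Set (Set X × Set X)) : Set X :=
  ⋃₀ {S | ∃ P ∈ 𝒰, x ∈ P.1 ∧ S = P.2}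

/-- `st(A, 𝒰)` for a pair-family `𝒰`. -/
def pairStSet {X : Type*} (A : Set X) (𝒰 : Set (Set X × Set X)) : Set X :=
  ⋃₀ {S | ∃ P ∈ 𝒰, (A ∩ P.1).Nonempty ∧ S = P.2}

/-- A pair-network for `X`. -/
def IsPairNetwork {X : Type*} [TopologicalSpace X] (𝒰 : Set (Set X × Set X)) : Prop :=
  (∀ P ∈ 𝒰, P.1 ⊆ P.2) ∧
    ∀ (x : X) (U : Set X), x ∈ U → IsOpen U → ∃ P ∈ 𝒰, x ∈ P.1 ∧ P.2 ⊆ U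

/-- `𝒰′|_D = {P′ ∩ D : P ∈ 𝒰}`. -/
def firstCoordRestrict {X : Type*} (𝒰 : Set (Set X × Set X)) (D : Set X) : Set (Set X) :=
  (fun P : Set X × Set X => P.1 ∩ D) '' 𝒰

/-- A family of subsets of `X` consists of sets closed in the subspace `D` and is
locally finite in the subspace `D`. -/
def IsClosedLocallyFiniteIn {X : Type*} [TopologicalSpace X]
    (ℱ : Set (Set X)) (D : Set X) : Prop :=
  (∀ S ∈ ℱ, IsClosed {z : ↥D | (z : X) ∈ S}) ∧
    ∀ z : ↥D, ∃ V : Set X, IsOpen V ∧ (z : X) ∈ V ∧ {S ∈ ℱ | (S ∩ V).Nonempty}.Finite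

/-- `ℐ_Δ(X) = {({x}, {x}) : x isolated in X}`. -/
def pairDiag (X : Type*) [TopologicalSpace X] : Set (Set X × Set X) :=
  {P | ∃ x : X, IsOpen ({x} : Set X) ∧ P = (({x} : Set X), ({x} : Set X))}

section Thm23Aux

variable {X : Type*} [TopologicalSpace X]

private lemma isClosed_nonIsolatedPoints : IsClosed (nonIsolatedPoints X) := by
  rw [← isOpen_compl_iff]
  refine isOpen_iff_forall_mem_open.mpr fun x hx => ?_
  have hx' : IsOpen ({x} : Set X) := not_not.mp hx
  refine ⟨{x}, ?_, hx', rfl⟩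
  rintro y rfl
  simp only [nonIsolatedPoints, mem_compl_iff, mem_setOf_eq, not_not]
  exact hx'

private def Fam (𝒰 : ℕ → Set (Set X × Set X)) (i : ℕ) : Set (Set X) :=
  firstCoordRestrict (𝒰 i) (nonIsolatedPoints X)

private lemma Fam_subset {𝒰 : ℕ → Set (Set X × Set X)} {i : ℕ} {S : Set X}
    (hS : S ∈ Fam 𝒰 i) : S ⊆ nonIsolatedPoints X := by
  obtain ⟨P, _, rfl⟩ := hS
  exact inter_subset_right

private lemma isClosed_of_mem_Fam (𝒰 : ℕ → Set (Set X × Set X))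
    (hclf : ∀ n, IsClosedLocallyFiniteIn
      (firstCoordRestrict (𝒰 n) (nonIsolatedPoints X)) (nonIsolatedPoints X))
    {i : ℕ} {S : Set X} (hS : S ∈ Fam 𝒰 i) : IsClosed S := by
  have h1 : IsClosed {z : ↥(nonIsolatedPoints X) | (z : X) ∈ S} := (hclf i).1 S hS
  have h2 := (isClosed_nonIsolatedPoints (X := X)).isClosedMap_subtype_val _ h1
  convert h2 using 1
  ext x
  constructor
  · intro hx; exact ⟨⟨x, Fam_subset hS hx⟩, hx, rfl⟩
  · rintro ⟨⟨y, hy⟩, hyS, rfl⟩; exact hyS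

private lemma locfin_Fam (𝒰 : ℕ → Set (Set X × Set X))
    (hclf : ∀ n, IsClosedLocallyFiniteIn
      (firstCoordRestrict (𝒰 n) (nonIsolatedPoints X)) (nonIsolatedPoints X))
    (i : ℕ) (x : X) :
    ∃ V : Set X, IsOpen V ∧ x ∈ V ∧ {S ∈ Fam 𝒰 i | (S ∩ V).Nonempty}.Finite := by
  by_cases hx : x ∈ nonIsolatedPoints X
  · obtain ⟨V, hVo, hxV, hfin⟩ := (hclf i).2 ⟨x, hx⟩
    exact ⟨V, hVo, hxV, hfin⟩
  · refine ⟨{x}, not_not.mp hx, rfl, ?_⟩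
    convert Set.finite_empty
    ext S
    simp only [mem_setOf_eq, Set.mem_empty_iff_false, iff_false, not_and]
    rintro hS ⟨y, hyS, hyx⟩
    rw [mem_singleton_iff] at hyx
    exact hx (Fam_subset hS (hyx ▸ hyS))

private def Cc (𝒰 : ℕ → Set (Set X × Set X)) (i : ℕ) (y : X) : Set X :=
  ⋃₀ {S ∈ Fam 𝒰 i | y ∉ S}

private lemma isClosed_Cc (𝒰 : ℕ → Set (Set X × Set X))
    (hclf : ∀ n, IsClosedLocallyFiniteIn
      (firstCoordRestrict (𝒰 n) (nonIsolatedPoints X)) (nonIsolatedPoints X))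
    (i : ℕ) (y : X) : IsClosed (Cc 𝒰 i y) := by
  have he : Cc 𝒰 i y = ⋃ (j : {S ∈ Fam 𝒰 i | y ∉ S}), (j : Set X) := sUnion_eq_iUnion
  rw [he]
  refine LocallyFinite.isClosed_iUnion ?_ fun j => isClosed_of_mem_Fam 𝒰 hclf j.2.1
  intro x
  obtain ⟨V, hVo, hxV, hfin⟩ := locfin_Fam 𝒰 hclf i x
  refine ⟨V, hVo.mem_nhds hxV, ?_⟩
  have hsub : {j : {S ∈ Fam 𝒰 i | y ∉ S} | ((j : Set X) ∩ V).Nonempty} ⊆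
      Subtype.val ⁻¹' {S ∈ Fam 𝒰 i | (S ∩ V).Nonempty} := fun j hj => ⟨j.2.1, hj⟩
  exact Set.Finite.subset (hfin.preimage Subtype.val_injective.injOn) hsub

private lemma not_mem_Cc_self {𝒰 : ℕ → Set (Set X × Set X)} {i : ℕ} {y : X} :
    y ∉ Cc 𝒰 i y := by
  rintro ⟨S, ⟨hSF, hyS⟩, hy⟩
  exact hyS hy

private lemma mem_of_not_mem_Cc {𝒰 : ℕ → Set (Set X × Set X)} {i : ℕ} {x y : X}
    (h : x ∉ Cc 𝒰 i y) {S : Set X} (hS : S ∈ Fam 𝒰 i) (hxS : x ∈ S) : y ∈ S := by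
  by_contra hyS
  exact h ⟨S, ⟨hS, hyS⟩, hxS⟩

private lemma pairSt_mono {𝒰m : Set (Set X × Set X)} {x y : X}
    (h : ∀ P ∈ 𝒰m, x ∈ P.1 → y ∈ P.1) : pairSt x 𝒰m ⊆ pairSt y 𝒰m := by
  rintro z ⟨S, ⟨P, hP, hxP, rfl⟩, hz⟩
  exact ⟨P.2, ⟨P, hP, h P hP hxP, rfl⟩, hz⟩

open Classical in
private noncomputable def Qy (𝒰 : ℕ → Set (Set X × Set X)) (n : ℕ) (y : X) : Set X :=
  ⋂ i ∈ Finset.range (n+1),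
    ((Cc 𝒰 i y)ᶜ ∩
      (if y ∈ interior (pairSt y (𝒰 i)) then interior (pairSt y (𝒰 i)) else Set.univ))

private lemma isOpen_Qy (𝒰 : ℕ → Set (Set X × Set X))
    (hclf : ∀ n, IsClosedLocallyFiniteIn
      (firstCoordRestrict (𝒰 n) (nonIsolatedPoints X)) (nonIsolatedPoints X))
    (n : ℕ) (y : X) : IsOpen (Qy 𝒰 n y) := by
  refine isOpen_biInter_finset fun i _ => IsOpen.inter (isClosed_Cc 𝒰 hclf i y).isOpen_compl ?_
  split_ifs
  · exact isOpen_interior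
  · exact isOpen_univ

private lemma mem_Qy_self (𝒰 : ℕ → Set (Set X × Set X)) (n : ℕ) (y : X) :
    y ∈ Qy 𝒰 n y := by
  refine mem_iInter₂.mpr fun i _ => ⟨not_mem_Cc_self, ?_⟩
  split_ifs with h
  · exact h
  · trivial

open Classical in
private lemma Qy_subset (𝒰 : ℕ → Set (Set X × Set X)) {n i : ℕ} (h : i ≤ n) (y : X) :
    Qy 𝒰 n y ⊆ (Cc 𝒰 i y)ᶜ ∩
      (if y ∈ interior (pairSt y (𝒰 i)) then interior (pairSt y (𝒰 i)) else Set.univ) :=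
  fun _x hx => mem_iInter₂.mp hx i (Finset.mem_range.mpr (Nat.lt_succ_of_le h))

private def Qn (𝒰 : ℕ → Set (Set X × Set X)) (n : ℕ) : Set (Set X) :=
  {Q | ∃ y ∈ nonIsolatedPoints X, Q = Qy 𝒰 n y} ∪
    {Q | ∃ z : X, IsOpen ({z} : Set X) ∧ Q = {z}}

end Thm23Aux

/-- Theorem 2.3, (3) ⇒ (1). -/
theorem theorem_2_3_3_implies_1 {X : Type*} [TopologicalSpace X] [T2Space X]
    (𝒰 : ℕ → Set (Set X × Set X))
    (hnet : IsPairNetwork (⋃ n, 𝒰 n))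
    (hclf : ∀ n, IsClosedLocallyFiniteIn
      (firstCoordRestrict (𝒰 n) (nonIsolatedPoints X)) (nonIsolatedPoints X))
    (hst : ∀ (x : X) (U : Set X), x ∈ U → IsOpen U →
      ∃ m, x ∈ interior (pairSt x (𝒰 m)) ∧ interior (pairSt x (𝒰 m)) ⊆ U) :
    ∃ 𝒬 : ℕ → Set (Set X), IsDevelopmentAtNonIsolatedPoints 𝒬 := by
  classical
  refine ⟨Qn 𝒰, ?_, ?_, ?_⟩
  · rintro n P (⟨y, _, rfl⟩ | ⟨z, hz, rfl⟩)
    · exact isOpen_Qy 𝒰 hclf n y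
    · exact hz
  · intro n
    refine eq_univ_iff_forall.mpr fun x => ?_
    by_cases hx : IsOpen ({x} : Set X)
    · exact ⟨{x}, Or.inr ⟨x, hx, rfl⟩, rfl⟩
    · exact ⟨Qy 𝒰 n x, Or.inl ⟨x, hx, rfl⟩, mem_Qy_self 𝒰 n x⟩
  · intro x hxD U hxU hU
    obtain ⟨m, hxB, hBU⟩ := hst x U hxU hU
    obtain ⟨V, hVo, hxV, hfin⟩ := locfin_Fam 𝒰 hclf m x
    set 𝒮 : Set (Set X) := {S ∈ Fam 𝒰 m | (S ∩ V).Nonempty ∧ x ∉ S} with h𝒮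
    have h𝒮fin : 𝒮.Finite := hfin.subset fun S hS => ⟨hS.1, hS.2.1⟩
    have h𝒮cl : IsClosed (⋃₀ 𝒮) := by
      rw [sUnion_eq_biUnion]
      exact h𝒮fin.isClosed_biUnion fun S hS => isClosed_of_mem_Fam 𝒰 hclf hS.1
    set W : Set X := (V ∩ interior (pairSt x (𝒰 m))) \ ⋃₀ 𝒮 with hW
    have hWo : IsOpen W := (hVo.inter isOpen_interior).sdiff h𝒮cl
    have hxW : x ∈ W := ⟨⟨hxV, hxB⟩, by rintro ⟨S, hS, hxS⟩; exact hS.2.2 hxS⟩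
    obtain ⟨P₀, hP₀U, hxP₀, hP₀W⟩ := hnet.2 x W hxW hWo
    obtain ⟨k, hP₀k⟩ := mem_iUnion.mp hP₀U
    refine ⟨max k m, ?_⟩
    rintro z ⟨Q, ⟨hQmem, hxQ⟩, hzQ⟩
    rcases hQmem with ⟨y, hyD, rfl⟩ | ⟨w, hw, rfl⟩
    · -- main case
      have hk : x ∉ Cc 𝒰 k y := (Qy_subset 𝒰 (le_max_left k m) y hxQ).1
      have hm : x ∉ Cc 𝒰 m y := (Qy_subset 𝒰 (le_max_right k m) y hxQ).1
      have hS₀ : P₀.1 ∩ nonIsolatedPoints X ∈ Fam 𝒰 k := ⟨P₀, hP₀k, rfl⟩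
      have hyS₀ : y ∈ P₀.1 ∩ nonIsolatedPoints X :=
        mem_of_not_mem_Cc hk hS₀ ⟨hxP₀, hxD⟩
      have hyW : y ∈ W := hP₀W (hnet.1 P₀ hP₀U hyS₀.1)
      have hmono1 : pairSt x (𝒰 m) ⊆ pairSt y (𝒰 m) :=
        pairSt_mono fun P hP hxP1 =>
          (mem_of_not_mem_Cc hm ⟨P, hP, rfl⟩ ⟨hxP1, hxD⟩).1
      have hyA : y ∈ interior (pairSt y (𝒰 m)) := interior_mono hmono1 hyW.1.2
      have hQsub : Qy 𝒰 (max k m) y ⊆ interior (pairSt y (𝒰 m)) := by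
        intro a ha
        have h2 := (Qy_subset 𝒰 (le_max_right k m) y ha).2
        rwa [if_pos hyA] at h2
      have hmono2 : pairSt y (𝒰 m) ⊆ pairSt x (𝒰 m) := by
        refine pairSt_mono fun P hP hyP1 => ?_
        have hSm : P.1 ∩ nonIsolatedPoints X ∈ Fam 𝒰 m := ⟨P, hP, rfl⟩
        have hyS : y ∈ P.1 ∩ nonIsolatedPoints X := ⟨hyP1, hyD⟩
        by_contra hxP1
        have hmem : P.1 ∩ nonIsolatedPoints X ∈ 𝒮 :=
          ⟨hSm, ⟨y, hyS, hyW.1.1⟩, fun hxS => hxP1 hxS.1⟩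
        exact hyW.2 ⟨_, hmem, hyS⟩
      exact hBU (interior_mono hmono2 (hQsub hzQ))
    · rw [mem_singleton_iff] at hxQ
      subst hxQ
      exact absurd hw hxD
end
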